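/- If there is a classical protocol with shared randomness using c bits of communication that perfectly reproduces an (n,k,d) correlation problem P with promise D, then there exists an lhv model (with detector no-click outputs allowed) in which the probability that all n detectors click is 2^{-c} independently of the input, and which produces the correct conditional output distribution given that all detectors click. Hence η*ⁿ ≥ 2^{-R^{pub}(P)}. -/

import Mathlib

/-- A shared-randomness protocol with `c` bits of communication that perfectly
reproduces the correlation problem `P` on `D` yields an lhv model (with no-click
outputs `none`) in which the probability that all detectors click equals `2^{-c}`
independently of the input, and which reproduces the correct conditional output
distribution given that all detectors click. Hence `η*ⁿ ≥ 2^{-R^pub(P)}`. -/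
theorem stmt6 (n k d c : ℕ)
    (P : (Fin n → Fin k) → (Fin n → Fin d) → ℝ)
    (D : Set (Fin n → Fin k))
    (Ω : Type) [Fintype Ω] (μ : Ω → ℝ)
    (hμ0 : ∀ ω, 0 ≤ μ ω) (hμ1 : ∑ ω, μ ω = 1)
    (conv : Ω → (Fin n → Fin k) → Fin (2 ^ c))
    (out : Ω → (i : Fin n) → Fin (2 ^ c) → Fin k → Fin d)
    (hrect : ∀ ω t, ∃ R : Fin n → Set (Fin k), {X | conv ω X = t} = Set.univ.pi R)
    (hrepr : ∀ X ∈ D, ∀ a : Fin n → Fin d,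
      P X a = ∑ ω, μ ω * (if ∀ i, out ω i (conv ω X) (X i) = a i then 1 else 0)) :
    ∃ (N : ℕ) (μ' : Fin N → ℝ) (lam : Fin N → Fin n → Fin k → Option (Fin d)),
      (∀ ω', 0 ≤ μ' ω') ∧ (∑ ω', μ' ω') = 1 ∧
      (∀ X ∈ D, ∑ ω', μ' ω' * (if ∀ i, lam ω' i (X i) ≠ none then 1 else 0)
          = (2 : ℝ) ^ (-(c : ℝ))) ∧
      (∀ X ∈ D, ∀ a : Fin n → Fin d,
        ∑ ω', μ' ω' * (if ∀ i, lam ω' i (X i) = some (a i) then 1 else 0)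
          = (2 : ℝ) ^ (-(c : ℝ)) * P X a) := by
  classical
  set r : ℝ := (2 : ℝ) ^ (-(c : ℝ)) with hrdef
  have h2 : r = ((2 : ℝ) ^ c)⁻¹ := by
    rw [hrdef, Real.rpow_neg (by norm_num : (0:ℝ) ≤ 2), ← Real.rpow_natCast 2 c]
  have hrnn : 0 ≤ r := Real.rpow_nonneg (by norm_num) _
  set e := (Fintype.equivFin (Ω × Fin (2 ^ c))).symm with he
  -- key rectangle property
  have key : ∀ ω t (X : Fin n → Fin k),
      (∀ i, ∃ X', conv ω X' = t ∧ X' i = X i) ↔ conv ω X = t := by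
    intro ω t X
    constructor
    · intro h
      obtain ⟨R, hR⟩ := hrect ω t
      have hmem : X ∈ Set.univ.pi R := by
        intro i _
        obtain ⟨X', hX', hXi⟩ := h i
        have hX'm : X' ∈ Set.univ.pi R := by rw [← hR]; exact hX'
        exact hXi ▸ hX'm i (Set.mem_univ i)
      have : X ∈ {X | conv ω X = t} := by rw [hR]; exact hmem
      exact this
    · intro h i; exact ⟨X, h, rfl⟩
  refine ⟨Fintype.card (Ω × Fin (2 ^ c)),
    fun j => μ (e j).1 * r,
    fun j i x => if h : ∃ X', conv (e j).1 X' = (e j).2 ∧ X' i = x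
      then some (out (e j).1 i (e j).2 x) else none, ?_, ?_, ?_, ?_⟩
  · intro j
    exact mul_nonneg (hμ0 _) hrnn
  · calc ∑ j, μ (e j).1 * r = ∑ p : Ω × Fin (2 ^ c), μ p.1 * r :=
          Fintype.sum_equiv e _ _ (fun j => rfl)
      _ = ∑ ω : Ω, ∑ _t : Fin (2 ^ c), μ ω * r := Fintype.sum_prod_type _
      _ = ∑ ω : Ω, μ ω := by
          refine Finset.sum_congr rfl fun ω _ => ?_
          rw [Finset.sum_const, Finset.card_univ, Fintype.card_fin, nsmul_eq_mul, h2]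
          push_cast
          have : (2:ℝ) ^ c ≠ 0 := by positivity
          field_simp
      _ = 1 := hμ1
  · intro X hX
    have hcond : ∀ ω t,
        (∀ i, (if h : ∃ X', conv ω X' = t ∧ X' i = X i
            then some (out ω i t (X i)) else none) ≠ none) ↔ conv ω X = t := by
      intro ω t
      rw [← key ω t X]
      refine forall_congr' fun i => ?_
      constructor
      · intro h
        by_contra hc
        rw [dif_neg hc] at h
        exact h rfl
      · intro h
        rw [dif_pos h]
        exact Option.some_ne_none _
    calc ∑ j, μ (e j).1 * r *
          (if ∀ i, (if h : ∃ X', conv (e j).1 X' = (e j).2 ∧ X' i = X i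
              then some (out (e j).1 i (e j).2 (X i)) else none) ≠ none then 1 else 0)
        = ∑ p : Ω × Fin (2 ^ c), μ p.1 * r * (if conv p.1 X = p.2 then 1 else 0) := by
          refine Fintype.sum_equiv e _ _ fun j => ?_
          exact congrArg _ (if_congr (hcond (e j).1 (e j).2) rfl rfl)
      _ = ∑ ω : Ω, ∑ t : Fin (2 ^ c), μ ω * r * (if conv ω X = t then 1 else 0) :=
          Fintype.sum_prod_type _
      _ = ∑ ω : Ω, μ ω * r := by
          refine Finset.sum_congr rfl fun ω _ => ?_
          simp [mul_ite, mul_one, mul_zero, Finset.sum_ite_eq]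
      _ = r := by rw [← Finset.sum_mul, hμ1, one_mul]
  · intro X hX a
    have hcond2 : ∀ ω t,
        (∀ i, (if h : ∃ X', conv ω X' = t ∧ X' i = X i
            then some (out ω i t (X i)) else none) = some (a i))
          ↔ (conv ω X = t ∧ ∀ i, out ω i t (X i) = a i) := by
      intro ω t
      constructor
      · intro h
        have hc : conv ω X = t := by
          rw [← key ω t X]
          intro i
          by_contra hci
          have := h i
          rw [dif_neg hci] at this
          exact Option.some_ne_none _ this.symm
        refine ⟨hc, fun i => ?_⟩
        have := h i
        rw [dif_pos ⟨X, hc, rfl⟩] at this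
        exact Option.some.inj this
      · rintro ⟨hc, hout⟩ i
        rw [dif_pos ⟨X, hc, rfl⟩, hout i]
    calc ∑ j, μ (e j).1 * r *
          (if ∀ i, (if h : ∃ X', conv (e j).1 X' = (e j).2 ∧ X' i = X i
              then some (out (e j).1 i (e j).2 (X i)) else none) = some (a i) then 1 else 0)
        = ∑ p : Ω × Fin (2 ^ c), μ p.1 * r *
            (if conv p.1 X = p.2 ∧ ∀ i, out p.1 i p.2 (X i) = a i then 1 else 0) := by
          refine Fintype.sum_equiv e _ _ fun j => ?_
          exact congrArg _ (if_congr (hcond2 (e j).1 (e j).2) rfl rfl)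
      _ = ∑ ω : Ω, ∑ t : Fin (2 ^ c), μ ω * r *
            (if conv ω X = t ∧ ∀ i, out ω i t (X i) = a i then 1 else 0) :=
          Fintype.sum_prod_type _
      _ = ∑ ω : Ω, μ ω * r *
            (if ∀ i, out ω i (conv ω X) (X i) = a i then 1 else 0) := by
          refine Finset.sum_congr rfl fun ω _ => ?_
          simp [ite_and, mul_ite, mul_one, mul_zero, Finset.sum_ite_eq]
      _ = r * P X a := by
          rw [hrepr X hX a, Finset.mul_sum]
          exact Finset.sum_congr rfl fun ω _ => by ring
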